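/- Let n ≥ 1, let σ ∈ C_{2n}(123), and let p with 1 ≤ p ≤ n be a left-to-right minimum position of σ. Then σ(p) ≥ max{ a : 1 ≤ a ≤ n and a ∉ {σ(j) : 1 ≤ j < p} ∪ {2n+1−σ(j) : 1 ≤ j < p} }. (The right-hand side is the middle element m(A) of the alphabet A of symbols not yet used, A being closed under the complementation a ↦ 2n+1−a.) -/
import Mathlib


/-- The value of the permutation `σ` of `{1,…,N}` (modeled on `Fin N`) at a
1-indexed position `i` (so `pval σ i ∈ {1,…,N}` for `1 ≤ i ≤ N`). -/
def pval {N : ℕ} (σ : Equiv.Perm (Fin N)) (i : ℕ) : ℕ :=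
  if h : i - 1 < N then ((σ ⟨i - 1, h⟩ : ℕ) + 1) else 0

/-- `σ` is centrosymmetric: `σ(i) + σ(N+1−i) = N+1` for all `1 ≤ i ≤ N`. -/
def IsCentro {N : ℕ} (σ : Equiv.Perm (Fin N)) : Prop :=
  ∀ i, 1 ≤ i → i ≤ N → pval σ i + pval σ (N + 1 - i) = N + 1

/-- `σ` avoids the pattern 132. -/
def Avoids132 {N : ℕ} (σ : Equiv.Perm (Fin N)) : Prop :=
  ¬ ∃ i j k, 1 ≤ i ∧ i < j ∧ j < k ∧ k ≤ N ∧
    pval σ i < pval σ k ∧ pval σ k < pval σ j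

/-- `σ` avoids the pattern 123. -/
def Avoids123 {N : ℕ} (σ : Equiv.Perm (Fin N)) : Prop :=
  ¬ ∃ i j k, 1 ≤ i ∧ i < j ∧ j < k ∧ k ≤ N ∧
    pval σ i < pval σ j ∧ pval σ j < pval σ k

/-- The number of descents of `σ`: positions `1 ≤ i ≤ N−1` with `σ(i) > σ(i+1)`. -/
noncomputable def des {N : ℕ} (σ : Equiv.Perm (Fin N)) : ℕ :=
  Nat.card {i : ℕ // 1 ≤ i ∧ i + 1 ≤ N ∧ pval σ (i + 1) < pval σ i}

lemma pval_def {N : ℕ} (σ : Equiv.Perm (Fin N)) {i : ℕ} (h1 : 1 ≤ i) (h2 : i ≤ N) :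
    pval σ i = (σ ⟨i - 1, by omega⟩ : ℕ) + 1 := by
  unfold pval; rw [dif_pos]

lemma pval_range {N : ℕ} (σ : Equiv.Perm (Fin N)) {i : ℕ} (h1 : 1 ≤ i) (h2 : i ≤ N) :
    1 ≤ pval σ i ∧ pval σ i ≤ N := by
  rw [pval_def σ h1 h2]
  have := (σ ⟨i - 1, by omega⟩).isLt
  omega

lemma pval_surj {N : ℕ} (σ : Equiv.Perm (Fin N)) {v : ℕ} (h1 : 1 ≤ v) (h2 : v ≤ N) :
    ∃ q, 1 ≤ q ∧ q ≤ N ∧ pval σ q = v := by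
  refine ⟨(σ.symm ⟨v - 1, by omega⟩ : ℕ) + 1, by omega,
    by have := (σ.symm ⟨v - 1, by omega⟩).isLt; omega, ?_⟩
  rw [pval_def σ (by omega) (by have := (σ.symm ⟨v - 1, by omega⟩).isLt; omega)]
  have : (⟨(σ.symm ⟨v - 1, by omega⟩ : ℕ) + 1 - 1, by
      have := (σ.symm ⟨v - 1, by omega⟩).isLt; omega⟩ : Fin N) = σ.symm ⟨v - 1, by omega⟩ := by
    ext; simp
  rw [this, Equiv.apply_symm_apply]
  simp
  omega

/-- if `σ ∈ C_{2n}(123)` and `1 ≤ p ≤ n` is a left-to-right minimum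
position, then `σ(p)` is at least every element `a ≤ n` of the alphabet of symbols not
yet used among `σ(1),…,σ(p−1)` and their complements, i.e. `σ(p) ≥ m(A)`. -/
theorem stmt4 (n : ℕ) (hn : 1 ≤ n) (σ : Equiv.Perm (Fin (2 * n)))
    (hσ : IsCentro σ) (hav : Avoids123 σ)
    (p : ℕ) (hp1 : 1 ≤ p) (hp2 : p ≤ n)
    (hmin : ∀ j, 1 ≤ j → j < p → pval σ p < pval σ j) :
    ∀ a, 1 ≤ a → a ≤ n →
      (∀ j, 1 ≤ j → j < p → a ≠ pval σ j ∧ a ≠ 2 * n + 1 - pval σ j) →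
      a ≤ pval σ p := by
  intro a ha1 ha2 hfree
  by_contra hcon
  push_neg at hcon
  -- hcon : pval σ p < a
  obtain ⟨q, hq1, hq2, hqa⟩ := pval_surj σ (v := a) (by omega) (by omega)
  have hpb := pval_range σ hp1 (by omega : p ≤ 2 * n)
  -- q > p
  have hqp : p < q := by
    rcases lt_trichotomy q p with h | h | h
    · exact absurd hqa (Ne.symm ((hfree q hq1 h).1))
    · subst h; omega
    · exact h
  -- complement position q2 = 2n+1-q carries value 2n+1-a
  have hq2b : 1 ≤ 2 * n + 1 - q ∧ 2 * n + 1 - q ≤ 2 * n := by omega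
  have hcq := hσ q hq1 hq2
  have hq2v : pval σ (2 * n + 1 - q) = 2 * n + 1 - a := by omega
  have hq2p : p < 2 * n + 1 - q := by
    rcases lt_trichotomy (2 * n + 1 - q) p with h | h | h
    · have := (hfree _ hq2b.1 h).2
      omega
    · rw [h] at hq2v; omega
    · exact h
  rcases lt_trichotomy q (2 * n + 1 - q) with h | h | h
  · -- pattern (p, q, 2n+1-q) : σ(p) < a < 2n+1-a
    exact hav ⟨p, q, 2 * n + 1 - q, hp1, hqp, h, hq2b.2, by omega, by omega⟩
  · omega
  · -- q2 < q, pattern (p, 2n+1-q, 2n+1-p) : σ(p) < 2n+1-a < 2n+1-σ(p)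
    have hcp := hσ p hp1 (by omega : p ≤ 2 * n)
    have hpv2 := pval_range σ (i := 2 * n + 1 - p) (by omega) (by omega)
    exact hav ⟨p, 2 * n + 1 - q, 2 * n + 1 - p, hp1, hq2p, by omega, by omega,
      by omega, by omega⟩
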